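/- If N is a proper unrooted phylogenetic network on X with a spanning tree T having exactly two leaves, then N is tree-based. (In particular, both leaves of T must belong to X.) -/
import Mathlib


open SimpleGraph

/-- Degree of a vertex (cardinality of its neighbour set). -/
noncomputable def deg {V : Type*} (G : SimpleGraph V) (v : V) : ℕ := (G.neighborSet v).ncard

/-- Leaves (degree-1 vertices) of a graph. -/
def leaves {V : Type*} (G : SimpleGraph V) : Set V := {v | deg G v = 1}

/-- An unrooted phylogenetic network on `X`: connected, no degree-2 vertices,
and the degree-1 vertices are exactly the elements of `X`. -/
def IsPhylo {V : Type*} (G : SimpleGraph V) (X : Set V) : Prop :=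
  G.Connected ∧ (∀ v, deg G v ≠ 2) ∧ leaves G = X

/-- Proper: every component obtained by removing a cut edge or a cut vertex
contains an element of `X` (every vertex can still reach an element of `X`). -/
def IsProper {V : Type*} (G : SimpleGraph V) (X : Set V) : Prop :=
  (∀ e ∈ G.edgeSet, ∀ v : V, ∃ x ∈ X, (G.deleteEdges {e}).Reachable v x) ∧
  (∀ w : V, ∀ v : ({w}ᶜ : Set V), ∃ x : ({w}ᶜ : Set V),
      (x : V) ∈ X ∧ (G.induce {w}ᶜ).Reachable v x)

/-- A spanning tree of `G`, viewed as a graph on the same vertex set. -/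
def IsSpanningTree {V : Type*} (G T : SimpleGraph V) : Prop := T ≤ G ∧ T.IsTree

/-- A support tree: a spanning tree whose leaf set is exactly `X`. -/
def IsSupportTree {V : Type*} (G T : SimpleGraph V) (X : Set V) : Prop :=
  IsSpanningTree G T ∧ leaves T = X

/-- `G` is tree-based (w.r.t. leaf set `X`): it has a support tree. -/
def TreeBased {V : Type*} (G : SimpleGraph V) (X : Set V) : Prop := ∃ T, IsSupportTree G T X

/-- `ℓ(N)`: minimum number of non-`X` leaves over all spanning trees. -/
noncomputable def ell {V : Type*} (G : SimpleGraph V) (X : Set V) : ℕ :=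
  sInf {n | ∃ T, IsSpanningTree G T ∧ n = (leaves T \ X).ncard}

theorem stmt19 {V : Type*} [Finite V] (G : SimpleGraph V) (X : Set V)
    (hphylo : IsPhylo G X) (hproper : IsProper G X)
    (T : SimpleGraph V) (hT : IsSpanningTree G T) (h2 : (leaves T).ncard = 2) :
    TreeBased G X ∧ leaves T ⊆ X := by
  obtain ⟨u, w, huw, hlT⟩ := Set.ncard_eq_two.mp h2
  have hle : T ≤ G := hT.1
  -- X ⊆ leaves T
  have hXsub : X ⊆ leaves T := by
    intro x hx
    have hdx : deg G x = 1 := by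
      have h := hphylo.2.2
      rw [← h] at hx
      exact hx
    -- pick y ≠ x among {u, w}
    obtain ⟨y, hyx⟩ : ∃ y : V, y ≠ x := by
      by_cases hxu : x = u
      · exact ⟨w, fun h => huw (h.symm ▸ hxu.symm ▸ rfl)⟩
      · exact ⟨u, fun h => hxu (h ▸ rfl)⟩
    have hconn := hT.2.isConnected
    obtain ⟨p⟩ := hconn x y
    have hne : (T.neighborSet x).Nonempty := by
      cases p with
      | nil => exact absurd rfl hyx
      | cons h q => exact ⟨_, h⟩
    obtain ⟨a, ha⟩ := Set.ncard_eq_one.mp hdx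
    have hsub : T.neighborSet x ⊆ G.neighborSet x := fun z hz => hle hz
    have : T.neighborSet x = {a} := by
      apply Set.Subset.antisymm
      · rw [← ha]; exact hsub
      · obtain ⟨b, hb⟩ := hne
        have : b ∈ G.neighborSet x := hsub hb
        rw [ha] at this
        intro c hc
        simp only [Set.mem_singleton_iff] at hc
        subst hc
        rwa [← this]
    show deg T x = 1
    rw [deg, this, Set.ncard_singleton]
  -- key lemma from properness about cut vertices
  have key : ∀ a b : V, a ≠ b → X ⊆ {b} → False := by
    intro a b hab hXb
    obtain ⟨x, hxX, -⟩ := hproper.2 b ⟨a, by simp [hab]⟩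
    exact x.2 (hXb hxX)
  have hsub2 : leaves T ⊆ X := by
    intro v hv
    by_contra hvX
    rw [hlT] at hv hXsub
    rcases hv with hv | hv
    · subst hv
      have hXw : X ⊆ {w} := by
        intro x hx
        rcases hXsub hx with h | h
        · exact absurd (h ▸ hx) hvX
        · exact h
      exact key v w huw hXw
    · subst hv
      have hXu : X ⊆ {u} := by
        intro x hx
        rcases hXsub hx with h | h
        · exact h
        · exact absurd (h ▸ hx) hvX
      exact key v u huw.symm hXu
  refine ⟨⟨T, hT, Set.Subset.antisymm hsub2 hXsub⟩, hsub2⟩
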